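/- If the directed graph K_R associated to a separated family R of partial sequences contains a directed cycle, then the set G_R is empty. More precisely: suppose there exist partial sequences (F_1,j_1),...,(F_r,j_r) (each F_l a subset of [n], j_l : F_l → ℤ) and indices i_1 ∈ F_1 ∩ F_2, i_2 ∈ F_2 ∩ F_3, ..., i_r ∈ F_r ∩ F_1 with j_1(i_1) < j_2(i_1), j_2(i_2) < j_3(i_2), ..., j_r(i_r) < j_1(i_r). Then there is no tuple of real sequences (x_{i,1} < ... < x_{i,k_i})_{i=1}^n satisfying x_{i, j_l(i)} = x_{i', j_l(i')} for all l and all i, i' ∈ F_l. -/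

import Mathlib

/-- If the directed graph `K_R` of a separated family of partial sequences contains a
directed cycle `(F_1,j_1) → ⋯ → (F_r,j_r) → (F_1,j_1)` (here of length `r = r' + 1 ≥ 1`),
witnessed by indices `i_l ∈ F_l ∩ F_{l+1}` with `j_l(i_l) < j_{l+1}(i_l)` (cyclically),
then `G_R` is empty: there is no tuple of real sequences `0 < x_{i,1} < ⋯ < x_{i,k_i} < 1`
satisfying `x_{i,j_l(i)} = x_{i',j_l(i')}` for all `l` and all `i, i' ∈ F_l`. -/
theorem stmt0 (n : ℕ) (k : Fin n → ℕ) (hk : ∀ i, 1 ≤ k i)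
    (r' : ℕ)
    (F : Fin (r' + 1) → Finset (Fin n)) (j : Fin (r' + 1) → Fin n → ℤ)
    (hjrange : ∀ l : Fin (r' + 1), ∀ i ∈ F l, j l i ∈ Finset.Icc (1 : ℤ) (k i))
    (idx : Fin (r' + 1) → Fin n)
    (hmem : ∀ l : Fin (r' + 1), idx l ∈ F l ∩ F (l + 1))
    (hlt : ∀ l : Fin (r' + 1), j l (idx l) < j (l + 1) (idx l)) :
    ¬ ∃ x : Fin n → ℤ → ℝ,
        (∀ i, StrictMonoOn (x i) (Set.Icc (1 : ℤ) (k i))) ∧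
        (∀ i, ∀ a ∈ Set.Icc (1 : ℤ) (k i), x i a ∈ Set.Ioo (0 : ℝ) 1) ∧
        (∀ l : Fin (r' + 1), ∀ i ∈ F l, ∀ i' ∈ F l, x i (j l i) = x i' (j l i')) := by
  rintro ⟨x, hmono, _, heq⟩
  letI := Fin.instCommRing (r' + 1)
  -- the common value of the l-th partial sequence
  set v : Fin (r' + 1) → ℝ := fun l => x (idx l) (j l (idx l)) with hv
  have hmemF : ∀ l, idx l ∈ F l := fun l => (Finset.mem_inter.1 (hmem l)).1
  have hmemF' : ∀ l, idx l ∈ F (l + 1) := fun l => (Finset.mem_inter.1 (hmem l)).2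
  have hstep : ∀ l : Fin (r' + 1), v l < v (l + 1) := by
    intro l
    have h1 : j l (idx l) ∈ Set.Icc (1 : ℤ) (k (idx l)) := by
      have := hjrange l (idx l) (hmemF l)
      simpa [Finset.mem_Icc, Set.mem_Icc] using this
    have h2 : j (l + 1) (idx l) ∈ Set.Icc (1 : ℤ) (k (idx l)) := by
      have := hjrange (l + 1) (idx l) (hmemF' l)
      simpa [Finset.mem_Icc, Set.mem_Icc] using this
    have hlt1 : x (idx l) (j l (idx l)) < x (idx l) (j (l + 1) (idx l)) :=
      hmono (idx l) h1 h2 (hlt l)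
    have heq1 : x (idx l) (j (l + 1) (idx l)) = x (idx (l + 1)) (j (l + 1) (idx (l + 1))) :=
      heq (l + 1) (idx l) (hmemF' l) (idx (l + 1)) (hmemF (l + 1))
    calc v l < x (idx l) (j (l + 1) (idx l)) := hlt1
      _ = v (l + 1) := heq1
  have hg : StrictMono (fun m : ℕ => v (m : Fin (r' + 1))) := by
    apply strictMono_nat_of_lt_succ
    intro m
    have : ((m + 1 : ℕ) : Fin (r' + 1)) = (m : Fin (r' + 1)) + 1 := by
      push_cast; ring
    rw [this]
    exact hstep _
  have h0 : ((r' + 1 : ℕ) : Fin (r' + 1)) = (0 : Fin (r' + 1)) := by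
    simp
  have := hg (Nat.lt_succ_self r')
  simp only [h0] at this
  have h2 := hg.monotone (Nat.zero_le r')
  simp only [Nat.cast_zero] at h2
  exact absurd (h2.trans_lt this) (lt_irrefl _)
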